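/- Let F be a field of characteristic zero. For every n ≥ 1, the F-span of the set of all functions from D to UT₂ of the form y ↦ b₀·y·b₁·y·b₂·⋯·y·bₙ (the variable y occurring exactly n times), where b₀, b₁, …, bₙ range over the diagonal subalgebra D, has dimension exactly 2. (This is the multiplicity of the irreducible character indexed by λ = (n), μ = ∅ in the generalized graded cocharacter of UT₂ under the action of D by left and right multiplication.) -/

import Mathlib

noncomputable section

/-- The algebra of `2 × 2` matrices over `F` (ambient algebra for `UT₂`). -/
abbrev M2 (F : Type*) [Field F] := Matrix (Fin 2) (Fin 2) F

/-- The matrix unit `e₁₁`. -/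
def e11 (F : Type*) [Field F] : M2 F := Matrix.single 0 0 1

/-- The matrix unit `e₁₂`. -/
def e12 (F : Type*) [Field F] : M2 F := Matrix.single 0 1 1

/-- The matrix unit `e₂₂`. -/
def e22 (F : Type*) [Field F] : M2 F := Matrix.single 1 1 1

/-- `D = F e₁₁ ⊕ F e₂₂`, the even component of the canonical `ℤ₂`-grading of `UT₂`. -/
def Dsub (F : Type*) [Field F] : Submodule F (M2 F) := Submodule.span F {e11 F, e22 F}

/-- `F e₁₂`, the odd component of the canonical `ℤ₂`-grading of `UT₂`. -/
def oddSub (F : Type*) [Field F] : Submodule F (M2 F) := Submodule.span F {e12 F}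

section Aux
variable {F : Type*} [Field F]

lemma mem_Dsub_iff (m : M2 F) : m ∈ Dsub F ↔ m 0 1 = 0 ∧ m 1 0 = 0 := by
  rw [Dsub, Submodule.mem_span_pair]
  constructor
  · rintro ⟨a, b, rfl⟩
    constructor <;> simp [e11, e22, Matrix.single]
  · rintro ⟨h1, h2⟩
    refine ⟨m 0 0, m 1 1, ?_⟩
    ext i j
    fin_cases i <;> fin_cases j <;>
      simp [e11, e22, Matrix.single, h1, h2]

lemma e11_mem : e11 F ∈ Dsub F := by
  rw [mem_Dsub_iff]; constructor <;> simp [e11, Matrix.single]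

lemma e22_mem : e22 F ∈ Dsub F := by
  rw [mem_Dsub_iff]; constructor <;> simp [e22, Matrix.single]

lemma mul_diag {a b : M2 F} (ha1 : a 0 1 = 0) (ha2 : a 1 0 = 0)
    (hb1 : b 0 1 = 0) (hb2 : b 1 0 = 0) :
    (a * b) 0 1 = 0 ∧ (a * b) 1 0 = 0 ∧ (a * b) 0 0 = a 0 0 * b 0 0 ∧
      (a * b) 1 1 = a 1 1 * b 1 1 := by
  refine ⟨?_, ?_, ?_, ?_⟩ <;>
    simp [Matrix.mul_apply, Fin.sum_univ_two, ha1, ha2, hb1, hb2]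

lemma list_prod_diag (L : List (M2 F)) (h : ∀ m ∈ L, m 0 1 = 0 ∧ m 1 0 = 0) :
    L.prod 0 1 = 0 ∧ L.prod 1 0 = 0 ∧
      L.prod 0 0 = (L.map (fun m => m 0 0)).prod ∧
      L.prod 1 1 = (L.map (fun m => m 1 1)).prod := by
  induction L with
  | nil => simp [Matrix.one_apply]
  | cons a L ih =>
    obtain ⟨ha1, ha2⟩ := h a (by simp)
    obtain ⟨h1, h2, h3, h4⟩ := ih (fun m hm => h m (by simp [hm]))
    obtain ⟨g1, g2, g3, g4⟩ := mul_diag ha1 ha2 h1 h2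
    simp [g1, g2, g3, g4, h3, h4]

/-- decomposition of a diagonal matrix -/
lemma diag_decomp (m : M2 F) (h1 : m 0 1 = 0) (h2 : m 1 0 = 0) :
    m = m 0 0 • e11 F + m 1 1 • e22 F := by
  ext i j
  fin_cases i <;> fin_cases j <;>
    simp [e11, e22, Matrix.single, h1, h2]

/-- the key computation: value of a generator -/
lemma gen_val (n : ℕ) (b : Fin (n + 1) → M2 F) (hb : ∀ i, b i ∈ Dsub F)
    (y : ↥(Dsub F)) :
    b 0 * (List.ofFn fun i : Fin n => ((y : M2 F)) * b i.succ).prod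
      = (b 0 0 0 * ∏ i : Fin n, b i.succ 0 0) • (((y:M2 F) 0 0) ^ n • e11 F)
        + (b 0 1 1 * ∏ i : Fin n, b i.succ 1 1) • (((y:M2 F) 1 1) ^ n • e22 F) := by
  have hy := (mem_Dsub_iff (y : M2 F)).1 y.2
  have hbd : ∀ i, b i 0 1 = 0 ∧ b i 1 0 = 0 := fun i => (mem_Dsub_iff _).1 (hb i)
  set L := (List.ofFn fun i : Fin n => ((y : M2 F)) * b i.succ) with hL
  have hmem : ∀ m ∈ L, m 0 1 = 0 ∧ m 1 0 = 0 := by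
    intro m hm
    rw [hL, List.mem_ofFn] at hm
    obtain ⟨i, rfl⟩ := hm
    obtain ⟨g1, g2, -, -⟩ := mul_diag hy.1 hy.2 (hbd i.succ).1 (hbd i.succ).2
    exact ⟨g1, g2⟩
  obtain ⟨p1, p2, p3, p4⟩ := list_prod_diag L hmem
  obtain ⟨q1, q2, q3, q4⟩ := mul_diag (hbd 0).1 (hbd 0).2 p1 p2
  have e00 : (b 0 * L.prod) 0 0
      = b 0 0 0 * ∏ i : Fin n, ((y:M2 F) 0 0 * b i.succ 0 0) := by
    rw [q3, p3, hL, List.map_ofFn, List.prod_ofFn]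
    simp only [Function.comp]
    congr 1
    exact Finset.prod_congr rfl fun i _ =>
      (mul_diag hy.1 hy.2 (hbd i.succ).1 (hbd i.succ).2).2.2.1
  have e11' : (b 0 * L.prod) 1 1
      = b 0 1 1 * ∏ i : Fin n, ((y:M2 F) 1 1 * b i.succ 1 1) := by
    rw [q4, p4, hL, List.map_ofFn, List.prod_ofFn]
    simp only [Function.comp]
    congr 1
    exact Finset.prod_congr rfl fun i _ =>
      (mul_diag hy.1 hy.2 (hbd i.succ).1 (hbd i.succ).2).2.2.2
  rw [diag_decomp (b 0 * L.prod) q1 q2, e00, e11']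
  simp only [Finset.prod_mul_distrib, Finset.prod_const, Finset.card_univ,
    Fintype.card_fin, smul_smul]
  ring_nf

end Aux

/-- For every `n ≥ 1`, the `F`-span of the functions `D → UT₂` of the
form `y ↦ b₀ y b₁ y b₂ ⋯ y bₙ` (with `y` occurring `n` times), where `b₀, …, bₙ` range
over the diagonal subalgebra `D`, has dimension exactly `2`. -/
theorem stmt19 (F : Type*) [Field F] [CharZero F] (n : ℕ) (hn : 1 ≤ n) :
    Module.finrank F ↥(Submodule.span F
      {f : ↥(Dsub F) → M2 F | ∃ b : Fin (n + 1) → M2 F,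
        (∀ i, b i ∈ Dsub F) ∧
        f = fun y : ↥(Dsub F) =>
          b 0 * (List.ofFn fun i : Fin n => ((y : M2 F)) * b i.succ).prod})
      = 2 := by
  classical
  set g1 : ↥(Dsub F) → M2 F := fun y => ((y : M2 F) 0 0) ^ n • e11 F with hg1
  set g2 : ↥(Dsub F) → M2 F := fun y => ((y : M2 F) 1 1) ^ n • e22 F with hg2
  have key : Submodule.span F
      {f : ↥(Dsub F) → M2 F | ∃ b : Fin (n + 1) → M2 F,
        (∀ i, b i ∈ Dsub F) ∧
        f = fun y : ↥(Dsub F) =>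
          b 0 * (List.ofFn fun i : Fin n => ((y : M2 F)) * b i.succ).prod}
      = Submodule.span F (Set.range ![g1, g2]) := by
    apply le_antisymm
    · rw [Submodule.span_le]
      rintro f ⟨b, hb, rfl⟩
      have : (fun y : ↥(Dsub F) =>
          b 0 * (List.ofFn fun i : Fin n => ((y : M2 F)) * b i.succ).prod)
        = (b 0 0 0 * ∏ i : Fin n, b i.succ 0 0) • g1
          + (b 0 1 1 * ∏ i : Fin n, b i.succ 1 1) • g2 := by
        funext y
        simpa using gen_val n b hb y
      rw [this]
      exact Submodule.add_mem _
        (Submodule.smul_mem _ _ (Submodule.subset_span ⟨0, rfl⟩))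
        (Submodule.smul_mem _ _ (Submodule.subset_span ⟨1, rfl⟩))
    · rw [Submodule.span_le]
      rintro f ⟨i, rfl⟩
      fin_cases i
      · refine Submodule.subset_span ⟨fun _ => e11 F, fun _ => e11_mem, ?_⟩
        funext y
        have := gen_val n (fun _ => e11 F) (fun _ => e11_mem) y
        simp only [Matrix.cons_val_zero] at this ⊢
        rw [this]
        simp [e11, Matrix.single, hg1]
      · refine Submodule.subset_span ⟨fun _ => e22 F, fun _ => e22_mem, ?_⟩
        funext y
        have := gen_val n (fun _ => e22 F) (fun _ => e22_mem) y
        simp only [Matrix.cons_val_one, Matrix.head_cons] at this ⊢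
        rw [this]
        simp [e22, Matrix.single, hg2]
  rw [key]
  have hli : LinearIndependent F ![g1, g2] := by
    rw [LinearIndependent.pair_iff]
    intro s t hst
    have h1 := congrFun hst ⟨e11 F, e11_mem⟩
    have h2 := congrFun hst ⟨e22 F, e22_mem⟩
    simp only [hg1, hg2, Pi.add_apply, Pi.smul_apply, Pi.zero_apply] at h1 h2
    constructor
    · have := congrFun (congrFun h1 0) 0
      simpa [e11, e22, Matrix.single] using this
    · have := congrFun (congrFun h2 1) 1
      simpa [e11, e22, Matrix.single] using this
  rw [finrank_span_eq_card hli]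
  simp
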